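/- Let M be a linearly ordered additive abelian group that is a ℚ-vector space, and let a, b, c, e ∈ M. If a < b and e ≠ 0, then a < H(a, b, c, e) < b. -/

import Mathlib

/-- The mixing function of Construction 2.3:
`H(a,b,c,e) = a + (1/2)•((|c−a|+|e|) ⊓ (b−a)) + (1/2)•((|c−a|+|e|) ⊓ (((b−a)−|e|) ⊔ 0))`. -/
def mixH {M : Type*} [AddCommGroup M] [LinearOrder M] [IsOrderedAddMonoid M] [Module ℚ M] (a b c e : M) : M :=
  a + (1/2 : ℚ) • ((|c - a| + |e|) ⊓ (b - a))
    + (1/2 : ℚ) • ((|c - a| + |e|) ⊓ (((b - a) - |e|) ⊔ 0))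

private lemma half_add {M : Type*} [AddCommGroup M] [LinearOrder M] [IsOrderedAddMonoid M] [Module ℚ M] (x : M) :
    (1/2 : ℚ) • x + (1/2 : ℚ) • x = x := by
  rw [← add_smul]; norm_num

private lemma half_pos' {M : Type*} [AddCommGroup M] [LinearOrder M] [IsOrderedAddMonoid M] [Module ℚ M] {x : M}
    (h : 0 < x) : 0 < (1/2 : ℚ) • x := by
  by_contra hc
  push_neg at hc
  have := add_nonpos hc hc
  rw [half_add] at this
  exact absurd h (not_lt.mpr this)

private lemma half_nonneg' {M : Type*} [AddCommGroup M] [LinearOrder M] [IsOrderedAddMonoid M] [Module ℚ M] {x : M}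
    (h : 0 ≤ x) : 0 ≤ (1/2 : ℚ) • x := by
  rcases h.lt_or_eq with h | h
  · exact (half_pos' h).le
  · rw [← h, smul_zero]

private lemma half_le {M : Type*} [AddCommGroup M] [LinearOrder M] [IsOrderedAddMonoid M] [Module ℚ M] {x y : M}
    (h : x ≤ y) : (1/2 : ℚ) • x ≤ (1/2 : ℚ) • y := by
  have := half_nonneg' (sub_nonneg.mpr h)
  rw [smul_sub] at this
  exact sub_nonneg.mp this

private lemma half_lt {M : Type*} [AddCommGroup M] [LinearOrder M] [IsOrderedAddMonoid M] [Module ℚ M] {x y : M}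
    (h : x < y) : (1/2 : ℚ) • x < (1/2 : ℚ) • y := by
  have := half_pos' (sub_pos.mpr h)
  rw [smul_sub] at this
  exact sub_pos.mp this

/-- If `a < b` and `e ≠ 0` then `a < H(a,b,c,e) < b`. -/
theorem stmt_5 {M : Type*} [AddCommGroup M] [LinearOrder M] [IsOrderedAddMonoid M] [Module ℚ M]
    (a b c e : M) (hab : a < b) (he : e ≠ 0) :
    a < mixH a b c e ∧ mixH a b c e < b := by
  have hepos : 0 < |e| := abs_pos.mpr he
  have hu : 0 < |c - a| + |e| := add_pos_of_nonneg_of_pos (abs_nonneg _) hepos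
  have hd : 0 < b - a := sub_pos.mpr hab
  set u : M := |c - a| + |e| with hu_def
  set d : M := b - a with hd_def
  have hs : 0 < (1/2 : ℚ) • (u ⊓ d) := half_pos' (lt_inf_iff.mpr ⟨hu, hd⟩)
  have ht : 0 ≤ (1/2 : ℚ) • (u ⊓ ((d - |e|) ⊔ 0)) :=
    half_nonneg' (le_inf hu.le le_sup_right)
  have hkey : (1/2 : ℚ) • (u ⊓ d) + (1/2 : ℚ) • (u ⊓ ((d - |e|) ⊔ 0)) < d := by
    rcases le_or_gt (d - |e|) 0 with h | h
    · have h0 : (d - |e|) ⊔ 0 = 0 := sup_eq_right.mpr h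
      have h1 : u ⊓ (0:M) = 0 := inf_eq_right.mpr hu.le
      rw [h0, h1, smul_zero, add_zero]
      calc (1/2 : ℚ) • (u ⊓ d) ≤ (1/2 : ℚ) • d := half_le inf_le_right
        _ < (1/2 : ℚ) • d + (1/2 : ℚ) • d := lt_add_of_pos_left _ (half_pos' hd)
        _ = d := half_add d
    · have h0 : (d - |e|) ⊔ 0 = d - |e| := sup_eq_left.mpr h.le
      rw [h0]
      have h2 : (1/2 : ℚ) • (u ⊓ d) ≤ (1/2 : ℚ) • d := half_le inf_le_right
      have h3 : (1/2 : ℚ) • (u ⊓ (d - |e|)) < (1/2 : ℚ) • d :=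
        lt_of_le_of_lt (half_le inf_le_right) (half_lt (sub_lt_self d hepos))
      calc (1/2 : ℚ) • (u ⊓ d) + (1/2 : ℚ) • (u ⊓ (d - |e|))
          < (1/2 : ℚ) • d + (1/2 : ℚ) • d := add_lt_add_of_le_of_lt h2 h3
        _ = d := half_add d
  have had : a + d = b := by rw [hd_def]; abel
  constructor
  · show a < a + (1/2 : ℚ) • (u ⊓ d) + (1/2 : ℚ) • (u ⊓ ((d - |e|) ⊔ 0))
    rw [add_assoc]
    exact lt_add_of_pos_right a (add_pos_of_pos_of_nonneg hs ht)
  · show a + (1/2 : ℚ) • (u ⊓ d) + (1/2 : ℚ) • (u ⊓ ((d - |e|) ⊔ 0)) < b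
    rw [add_assoc, ← had]
    exact add_lt_add_right hkey a
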